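/- LPostS = PostS: a language L ⊆ Σ* is recognized with some error bound ε < 1/2 by a Latvian RT-PostPFA if and only if it is recognized with some error bound ε < 1/2 by an RT-PostPFA. -/

import Mathlib

noncomputable section

/-- The input alphabet extended with the two endmarkers `¢` and `$`. -/
inductive ESym (α : Type) : Type where
  | cent : ESym α
  | dollar : ESym α
  | letter : α → ESym α

/-- The state distribution obtained by applying, in order, the matrices for
`¢`, the letters of `w`, and `$` to the standard basis vector at the initial state `0`. -/
def pRun {α : Type} {n : ℕ} (A : ESym α → Matrix (Fin (n + 1)) (Fin (n + 1)) ℝ)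
    (w : List α) : Fin (n + 1) → ℝ :=
  (ESym.cent :: (w.map ESym.letter ++ [ESym.dollar])).foldl
    (fun v σ => (A σ).mulVec v) (Pi.single 0 1)

/-- A real-time probabilistic finite automaton with postselection (RT-PostPFA). -/
structure PostPFA (α : Type) where
  n : ℕ
  A : ESym α → Matrix (Fin (n + 1)) (Fin (n + 1)) ℝ
  nonneg : ∀ σ i j, 0 ≤ A σ i j
  colSum : ∀ σ j, ∑ i, A σ i j = 1
  Qpa : Finset (Fin (n + 1))
  Qpr : Finset (Fin (n + 1))
  disj : Disjoint Qpa Qpr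
  postPos : ∀ w : List α,
    0 < (∑ i ∈ Qpa, pRun A w i) + (∑ i ∈ Qpr, pRun A w i)

/-- Acceptance probability before postselection. -/
def PostPFA.pacc {α : Type} (M : PostPFA α) (w : List α) : ℝ :=
  ∑ i ∈ M.Qpa, pRun M.A w i

/-- Rejection probability before postselection. -/
def PostPFA.prej {α : Type} (M : PostPFA α) (w : List α) : ℝ :=
  ∑ i ∈ M.Qpr, pRun M.A w i

/-- Normalized acceptance probability of an RT-PostPFA. -/
def PostPFA.fa {α : Type} (M : PostPFA α) (w : List α) : ℝ :=
  M.pacc w / (M.pacc w + M.prej w)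

/-- Recognition of a language with error bound `ε`. -/
def PostPFA.Recognizes {α : Type} (M : PostPFA α) (L : Set (List α)) (ε : ℝ) : Prop :=
  ∀ w : List α, (w ∈ L → 1 - ε ≤ M.fa w) ∧ (w ∉ L → M.fa w ≤ ε)

/-- The class of languages recognized by RT-PostPFAs with bounded error. -/
def PostS {α : Type} (L : Set (List α)) : Prop :=
  ∃ (M : PostPFA α) (ε : ℝ), 0 ≤ ε ∧ ε < 1 / 2 ∧ M.Recognizes L ε

/-- Recognition with zero error: `fa = 1` on members, `fa = 0` on non-members. -/
def PostPFA.RecognizesZero {α : Type} (M : PostPFA α) (L : Set (List α)) : Prop :=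
  ∀ w : List α, (w ∈ L → M.fa w = 1) ∧ (w ∉ L → M.fa w = 0)

/-- The class of languages recognized by RT-PostPFAs with zero error. -/
def ZPostS {α : Type} (L : Set (List α)) : Prop :=
  ∃ M : PostPFA α, M.RecognizesZero L

/-- The flag of a Latvian postselection automaton: accept (`A`) or reject (`R`)
with certainty when the postselection probability is zero. -/
inductive PostFlag : Type where
  | A : PostFlag
  | R : PostFlag
deriving DecidableEq

/-- A Latvian RT-PostPFA: an RT-PostPFA without the positivity requirement,
together with a flag `τ ∈ {A, R}`. -/
structure LPostPFA (α : Type) where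
  n : ℕ
  A : ESym α → Matrix (Fin (n + 1)) (Fin (n + 1)) ℝ
  nonneg : ∀ σ i j, 0 ≤ A σ i j
  colSum : ∀ σ j, ∑ i, A σ i j = 1
  Qpa : Finset (Fin (n + 1))
  Qpr : Finset (Fin (n + 1))
  disj : Disjoint Qpa Qpr
  tau : PostFlag

/-- Acceptance probability before postselection. -/
def LPostPFA.pacc {α : Type} (M : LPostPFA α) (w : List α) : ℝ :=
  ∑ i ∈ M.Qpa, pRun M.A w i

/-- Rejection probability before postselection. -/
def LPostPFA.prej {α : Type} (M : LPostPFA α) (w : List α) : ℝ :=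
  ∑ i ∈ M.Qpr, pRun M.A w i

/-- Acceptance probability of a Latvian RT-PostPFA. -/
def LPostPFA.fa {α : Type} (M : LPostPFA α) (w : List α) : ℝ :=
  if 0 < M.pacc w + M.prej w then M.pacc w / (M.pacc w + M.prej w)
  else if M.tau = PostFlag.A then 1 else 0

/-- Recognition of a language with error bound `ε`. -/
def LPostPFA.Recognizes {α : Type} (M : LPostPFA α) (L : Set (List α)) (ε : ℝ) : Prop :=
  ∀ w : List α, (w ∈ L → 1 - ε ≤ M.fa w) ∧ (w ∉ L → M.fa w ≤ ε)

/-- The class of languages recognized by Latvian RT-PostPFAs with bounded error. -/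
def LPostS {α : Type} (L : Set (List α)) : Prop :=
  ∃ (M : LPostPFA α) (ε : ℝ), 0 ≤ ε ∧ ε < 1 / 2 ∧ M.Recognizes L ε


/- ======================= auxiliary machinery ======================= -/

def esymEquiv (α : Type) : Option (Option α) ≃ ESym α where
  toFun x := match x with
    | none => ESym.cent
    | some none => ESym.dollar
    | some (some a) => ESym.letter a
  invFun s := match s with
    | ESym.cent => none
    | ESym.dollar => some none
    | ESym.letter a => some (some a)
  left_inv x := by rcases x with _ | (_ | a) <;> rfl
  right_inv s := by rcases s with _ | _ | a <;> rfl

instance {α : Type} [Fintype α] : Fintype (ESym α) := Fintype.ofEquiv _ (esymEquiv α)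

namespace LP

set_option linter.unusedTactic false

lemma foldl_mulVec_bound {N : ℕ} (m : ℝ) (hm : 0 ≤ m)
    (l : List (Matrix (Fin (N+1)) (Fin (N+1)) ℝ))
    (hl : ∀ B ∈ l, ∀ i j, 0 ≤ B i j ∧ (0 < B i j → m ≤ B i j))
    (c : ℝ) (hc : 0 ≤ c) (v : Fin (N+1) → ℝ)
    (hv : ∀ i, 0 ≤ v i ∧ (0 < v i → c ≤ v i)) :
    ∀ i, 0 ≤ (l.foldl (fun u B => B.mulVec u) v) i ∧
      (0 < (l.foldl (fun u B => B.mulVec u) v) i →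
        c * m ^ l.length ≤ (l.foldl (fun u B => B.mulVec u) v) i) := by
  induction l generalizing v c with
  | nil => simpa using hv
  | cons B l ih =>
    have hB := hl B (List.mem_cons_self)
    have hl' : ∀ B' ∈ l, ∀ i j, 0 ≤ B' i j ∧ (0 < B' i j → m ≤ B' i j) :=
      fun B' hB' => hl B' (List.mem_cons_of_mem _ hB')
    have hv' : ∀ i, 0 ≤ B.mulVec v i ∧ (0 < B.mulVec v i → c * m ≤ B.mulVec v i) := by
      intro i
      have hterm : ∀ j, 0 ≤ B i j * v j := fun j =>
        mul_nonneg (hB i j).1 (hv j).1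
      have hmv : B.mulVec v i = ∑ j, B i j * v j := by
        simp [Matrix.mulVec, dotProduct]
      constructor
      · rw [hmv]; exact Finset.sum_nonneg fun j _ => hterm j
      · intro hpos
        rw [hmv] at hpos ⊢
        obtain ⟨j, -, hj⟩ := Finset.exists_lt_of_sum_lt
          (show ∑ j : Fin (N+1), (0:ℝ) < ∑ j, B i j * v j by simpa using hpos)
        have hj' : 0 < B i j * v j := hj
        have hBpos : 0 < B i j := by
          rcases (hB i j).1.lt_or_eq with h | h
          · exact h
          · exfalso; rw [← h] at hj'; simp at hj'
        have hvpos : 0 < v j := by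
          rcases (hv j).1.lt_or_eq with h | h
          · exact h
          · exfalso; rw [← h] at hj'; simp at hj'
        calc c * m ≤ v j * B i j :=
              mul_le_mul ((hv j).2 hvpos) ((hB i j).2 hBpos) hm (le_trans hc ((hv j).2 hvpos))
          _ = B i j * v j := mul_comm _ _
          _ ≤ ∑ j, B i j * v j := Finset.single_le_sum (fun j _ => hterm j) (Finset.mem_univ j)
    have := ih hl' (c * m) (mul_nonneg hc hm) (B.mulVec v) hv'
    intro i
    refine ⟨(this i).1, fun hpos => ?_⟩
    have h2 := (this i).2 (by simpa using hpos)
    calc c * m ^ (B :: l).length = c * m * m ^ l.length := by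
          simp [pow_succ]; ring
      _ ≤ _ := by simpa using h2

lemma pRun_bound {α : Type} {N : ℕ} (A : ESym α → Matrix (Fin (N+1)) (Fin (N+1)) ℝ)
    (hA : ∀ σ i j, 0 ≤ A σ i j) (m : ℝ) (hm : 0 ≤ m)
    (hment : ∀ σ i j, 0 < A σ i j → m ≤ A σ i j) (w : List α) :
    ∀ i, 0 ≤ pRun A w i ∧ (0 < pRun A w i → m ^ (w.length + 2) ≤ pRun A w i) := by
  have hfold : pRun A w = ((ESym.cent :: (w.map ESym.letter ++ [ESym.dollar])).map A).foldl
      (fun u B => B.mulVec u) (Pi.single 0 1) := by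
    unfold pRun
    rw [List.foldl_map]
  have hlen : ((ESym.cent :: (w.map ESym.letter ++ [ESym.dollar])).map A).length
      = w.length + 2 := by simp
  have hsingle : ∀ i : Fin (N+1), 0 ≤ (Pi.single 0 1 : Fin (N+1) → ℝ) i ∧
      (0 < (Pi.single 0 1 : Fin (N+1) → ℝ) i → 1 ≤ (Pi.single 0 1 : Fin (N+1) → ℝ) i) := by
    intro i
    constructor
    · rw [Pi.single_apply]; split <;> norm_num
    · rw [Pi.single_apply]; split <;> intro h <;> simp at h ⊢
  have hlprop : ∀ B ∈ (ESym.cent :: (w.map ESym.letter ++ [ESym.dollar])).map A,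
      ∀ i j, 0 ≤ B i j ∧ (0 < B i j → m ≤ B i j) := by
    intro B hB i j
    obtain ⟨σ, -, rfl⟩ := List.mem_map.mp hB
    exact ⟨hA σ i j, hment σ i j⟩
  have := foldl_mulVec_bound m hm _ hlprop 1 zero_le_one (Pi.single 0 1) hsingle
  intro i
  obtain ⟨h1, h2⟩ := this i
  rw [hfold]
  exact ⟨h1, fun h => by simpa [hlen] using h2 h⟩

def ext {n : ℕ} (v : Fin (n+1) → ℝ) (t r : ℝ) : Fin (n+3) → ℝ :=
  fun x => if h : (x:ℕ) < n+1 then v ⟨x, h⟩ else if (x:ℕ) = n+1 then t else r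

def emb {n : ℕ} : Fin (n+1) ↪ Fin (n+3) :=
  ⟨fun i => ⟨i, by omega⟩, fun a b h => by simpa [Fin.ext_iff] using congrArg Fin.val h⟩

lemma emb_val {n : ℕ} (i : Fin (n+1)) : ((emb i : Fin (n+3)) : ℕ) = i := rfl

def eSt {n : ℕ} : Fin (n+3) := ⟨n+1, by omega⟩
def dSt {n : ℕ} : Fin (n+3) := ⟨n+2, by omega⟩

variable {n : ℕ} {v : Fin (n+1) → ℝ} {t r : ℝ}

lemma ext_emb (i : Fin (n+1)) : ext v t r (emb i) = v i := by
  simp [ext, emb_val, i.isLt]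

lemma ext_e : ext v t r eSt = t := by simp [ext, eSt]

lemma ext_d : ext v t r dSt = r := by simp [ext, dSt]

lemma fin3cases (x : Fin (n+3)) : (∃ i, x = emb i) ∨ x = eSt ∨ x = dSt := by
  rcases lt_or_ge (x:ℕ) (n+1) with h | h
  · exact Or.inl ⟨⟨x, h⟩, Fin.ext rfl⟩
  · rcases eq_or_lt_of_le h with h2 | h2
    · exact Or.inr (Or.inl (by simp [eSt, Fin.ext_iff, h2.symm]))
    · have : (x:ℕ) = n+2 := by omega
      exact Or.inr (Or.inr (by simp [dSt, Fin.ext_iff, this]))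

lemma dot_ext (f : Fin (n+3) → ℝ) (v : Fin (n+1) → ℝ) (t r : ℝ) :
    ∑ j, f j * ext v t r j = (∑ j, f (emb j) * v j) + f eSt * t + f dSt * r := by
  rw [Fin.sum_univ_castSucc, Fin.sum_univ_castSucc]
  have h1 : Fin.last (n+2) = dSt := rfl
  have h2 : (Fin.last (n+1)).castSucc = eSt := rfl
  have h3 : ∀ i : Fin (n+1), i.castSucc.castSucc = emb i := fun i => rfl
  rw [h1, h2]
  simp only [h3, ext_emb, ext_e, ext_d]

lemma sum_ext : ∑ x, ext v t r x = (∑ i, v i) + t + r := by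
  have := dot_ext (fun _ => (1:ℝ)) v t r
  simpa using this

def cf {α : Type} : ESym α → ℝ
  | ESym.cent => 1
  | _ => 0

lemma cf_cent {α : Type} : cf (ESym.cent : ESym α) = 1 := rfl

lemma cf_ne {α : Type} {σ : ESym α} (h : σ ≠ ESym.cent) : cf σ = 0 := by
  cases σ with
  | cent => exact absurd rfl h
  | dollar => rfl
  | letter a => rfl

lemma cf_mem {α : Type} (σ : ESym α) : cf σ = 0 ∨ cf σ = 1 := by
  cases σ <;> simp [cf]

def bmat {α : Type} (A : ESym α → Matrix (Fin (n+1)) (Fin (n+1)) ℝ) (δ : ℝ)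
    (σ : ESym α) : Matrix (Fin (n+3)) (Fin (n+3)) ℝ :=
  Matrix.of fun i j =>
    if h : (j:ℕ) < n+1 then
      ext (fun i' => (1 - δ * cf σ) * A σ i' ⟨j, h⟩) (δ * cf σ) 0 i
    else if (j:ℕ) = n+1 then ext (fun _ => 0) δ (1-δ) i
    else ext (fun _ => 0) 0 1 i

variable {α : Type} (A : ESym α → Matrix (Fin (n+1)) (Fin (n+1)) ℝ) (δ : ℝ)

lemma bmat_emb (σ : ESym α) (i : Fin (n+3)) (j : Fin (n+1)) :
    bmat A δ σ i (emb j) = ext (fun i' => (1 - δ * cf σ) * A σ i' j) (δ * cf σ) 0 i := by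
  have h : ((emb j : Fin (n+3)) : ℕ) < n + 1 := j.isLt
  simp only [bmat, Matrix.of_apply, dif_pos h]
  congr 1

lemma bmat_e (σ : ESym α) (i : Fin (n+3)) :
    bmat A δ σ i eSt = ext (fun _ => 0) δ (1-δ) i := by
  simp [bmat, eSt]

lemma bmat_d (σ : ESym α) (i : Fin (n+3)) :
    bmat A δ σ i dSt = ext (fun _ => 0) 0 1 i := by
  simp [bmat, dSt]

lemma mulVec_ext (σ : ESym α) (v : Fin (n+1) → ℝ) (t r : ℝ) :
    (bmat A δ σ).mulVec (ext v t r) =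
      ext (fun i => (1 - δ * cf σ) * (A σ).mulVec v i)
        (δ * cf σ * (∑ j, v j) + δ * t) ((1-δ) * t + r) := by
  funext x
  have hmv : (bmat A δ σ).mulVec (ext v t r) x = ∑ j, bmat A δ σ x j * ext v t r j := by
    simp [Matrix.mulVec, dotProduct]
  rw [hmv, dot_ext (fun j => bmat A δ σ x j) v t r]
  simp only [bmat_emb, bmat_e, bmat_d]
  rcases fin3cases x with ⟨i, rfl⟩ | rfl | rfl
  · simp only [ext_emb, ext_e, ext_d]
    simp [Matrix.mulVec, dotProduct, Finset.mul_sum, mul_assoc]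
  · simp only [ext_emb, ext_e, ext_d]
    simp [Finset.mul_sum]
  · simp only [ext_emb, ext_e, ext_d]
    simp

lemma bmat_nonneg (hA : ∀ σ i j, 0 ≤ A σ i j) (hδ0 : 0 ≤ δ) (hδ1 : δ ≤ 1) :
    ∀ (σ : ESym α) i j, 0 ≤ bmat A δ σ i j := by
  intro σ i j
  have hcf : 0 ≤ δ * cf σ ∧ δ * cf σ ≤ 1 := by
    refine ⟨?_, ?_⟩ <;> rcases cf_mem σ with h | h <;> simp [h] <;> linarith
  unfold bmat
  simp only [Matrix.of_apply]
  split
  · next h =>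
    rcases fin3cases i with ⟨i', rfl⟩ | rfl | rfl
    · rw [ext_emb]; exact mul_nonneg (by linarith [hcf.2]) (hA _ _ _)
    · rw [ext_e]; exact hcf.1
    · rw [ext_d]
  · split
    · rcases fin3cases i with ⟨i', rfl⟩ | rfl | rfl
      · rw [ext_emb]
      · rw [ext_e]; exact hδ0
      · rw [ext_d]; linarith
    · rcases fin3cases i with ⟨i', rfl⟩ | rfl | rfl
      · rw [ext_emb]
      · rw [ext_e]
      · rw [ext_d]; norm_num

lemma bmat_colSum (hA : ∀ σ j, ∑ i, A σ i j = 1) :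
    ∀ (σ : ESym α) j, ∑ i, bmat A δ σ i j = 1 := by
  intro σ j
  rcases fin3cases j with ⟨j', rfl⟩ | rfl | rfl
  · rw [show (∑ i, bmat A δ σ i (emb j')) =
        ∑ i, ext (fun i' => (1 - δ * cf σ) * A σ i' j') (δ * cf σ) 0 i from
      Finset.sum_congr rfl fun i _ => bmat_emb A δ σ i j']
    rw [sum_ext, ← Finset.mul_sum, hA]
    ring
  · rw [show (∑ i, bmat A δ σ i eSt) = ∑ i, ext (fun _ => (0:ℝ)) δ (1-δ) i from
      Finset.sum_congr rfl fun i _ => bmat_e A δ σ i]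
    rw [sum_ext]
    simp
  · rw [show (∑ i, bmat A δ σ i dSt) = ∑ i, ext (fun _ => (0:ℝ)) 0 1 i from
      Finset.sum_congr rfl fun i _ => bmat_d A δ σ i]
    rw [sum_ext]
    simp

lemma foldl_smul (l : List (ESym α)) (s : ℝ) (v : Fin (n+1) → ℝ) :
    l.foldl (fun u σ => (A σ).mulVec u) (s • v) =
      s • l.foldl (fun u σ => (A σ).mulVec u) v := by
  induction l generalizing v with
  | nil => rfl
  | cons σ l ih =>
    simp only [List.foldl_cons, Matrix.mulVec_smul]
    exact ih _

lemma foldl_bmat (l : List (ESym α)) (hl : ESym.cent ∉ l) (v : Fin (n+1) → ℝ) (t r : ℝ) :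
    ∃ r', l.foldl (fun u σ => (bmat A δ σ).mulVec u) (ext v t r) =
      ext (l.foldl (fun u σ => (A σ).mulVec u) v) (δ ^ l.length * t) r' := by
  induction l generalizing v t r with
  | nil => exact ⟨r, by simp⟩
  | cons σ l ih =>
    have hσ : σ ≠ ESym.cent := fun h => hl (h ▸ List.mem_cons_self)
    have hl' : ESym.cent ∉ l := fun h => hl (List.mem_cons_of_mem _ h)
    simp only [List.foldl_cons]
    rw [mulVec_ext]
    rw [cf_ne hσ]
    have heq : (fun i => (1 - δ * 0) * (A σ).mulVec v i) = (A σ).mulVec v := by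
      funext i; ring
    rw [heq]
    obtain ⟨r', hr'⟩ := ih hl' ((A σ).mulVec v) (δ * 0 * (∑ j, v j) + δ * t) ((1-δ) * t + r)
    refine ⟨r', ?_⟩
    rw [hr']
    congr 1
    simp [pow_succ]
    ring

lemma single_ext : (Pi.single 0 1 : Fin (n+3) → ℝ) = ext (Pi.single 0 1) 0 0 := by
  funext x
  rcases fin3cases x with ⟨i, rfl⟩ | rfl | rfl
  · rw [ext_emb]
    rw [Pi.single_apply, Pi.single_apply]; simp only [Fin.ext_iff, emb_val, Fin.val_zero]
  · rw [ext_e]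
    simp [Pi.single_apply, eSt, Fin.ext_iff]
  · rw [ext_d]
    simp [Pi.single_apply, dSt, Fin.ext_iff]

lemma pRun_bmat (w : List α) :
    ∃ r', pRun (bmat A δ) w =
      ext (fun i => (1-δ) * pRun A w i) (δ ^ (w.length + 2)) r' := by
  have hrest : ESym.cent ∉ (w.map ESym.letter ++ [ESym.dollar] : List (ESym α)) := by
    intro h
    rcases List.mem_append.mp h with h | h
    · obtain ⟨a, -, ha⟩ := List.mem_map.mp h
      exact nomatch ha
    · simp at h
  have hlen : (w.map ESym.letter ++ [ESym.dollar] : List (ESym α)).length = w.length + 1 := by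
    simp
  unfold pRun
  simp only [List.foldl_cons]
  rw [single_ext, mulVec_ext, cf_cent]
  have hsum : (∑ j, (Pi.single 0 1 : Fin (n+1) → ℝ) j) = 1 := by
    simp
  rw [hsum]
  have hv : (fun i => (1 - δ * 1) * (A ESym.cent).mulVec (Pi.single 0 1) i) =
      (1-δ) • (A ESym.cent).mulVec (Pi.single 0 1) := by
    funext i; simp [smul_eq_mul]
  rw [hv]
  obtain ⟨r', hr'⟩ := foldl_bmat A δ _ hrest
    ((1-δ) • (A ESym.cent).mulVec (Pi.single 0 1)) (δ * 1 * 1 + δ * 0) ((1-δ) * 0 + 0)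
  rw [hr', foldl_smul, hlen]
  refine ⟨r', ?_⟩
  have harg : δ ^ (w.length + 1) * (δ * 1 * 1 + δ * 0) = δ ^ (w.length + 2) := by ring
  rw [harg]
  funext x
  simp [ext, Pi.smul_apply]

lemma e_not_mem_map (Q : Finset (Fin (n+1))) : eSt ∉ Q.map emb := by
  intro h
  obtain ⟨i, -, hi⟩ := Finset.mem_map.mp h
  have := congrArg Fin.val hi
  simp [emb_val, eSt] at this
  omega

lemma sum_map_emb (Q : Finset (Fin (n+1))) (v : Fin (n+1) → ℝ) (t r : ℝ) :
    ∑ i ∈ Q.map emb, ext v t r i = ∑ i ∈ Q, v i := by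
  rw [Finset.sum_map]
  exact Finset.sum_congr rfl fun i _ => ext_emb i

lemma sum_union_e (Q : Finset (Fin (n+1))) (c : Prop) [Decidable c]
    (v : Fin (n+1) → ℝ) (t r : ℝ) :
    ∑ i ∈ (Q.map emb ∪ if c then {eSt} else ∅), ext v t r i
      = (∑ i ∈ Q, v i) + (if c then t else 0) := by
  by_cases hc : c
  · rw [if_pos hc, if_pos hc,
      Finset.sum_union (Finset.disjoint_singleton_right.mpr (e_not_mem_map Q)),
      sum_map_emb, Finset.sum_singleton, ext_e]
  · rw [if_neg hc, if_neg hc, Finset.union_empty, sum_map_emb, add_zero]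

lemma disj_union_e (Q Q' : Finset (Fin (n+1))) (h : Disjoint Q Q')
    (c c' : Prop) [Decidable c] [Decidable c'] (hcc : ¬(c ∧ c')) :
    Disjoint (Q.map emb ∪ if c then {eSt} else ∅)
      (Q'.map emb ∪ if c' then {eSt} else ∅) := by
  have hmm : Disjoint (Q.map emb) (Q'.map emb) := by
    rw [Finset.disjoint_map]
    exact h
  by_cases hc : c <;> by_cases hc' : c'
  · exact absurd ⟨hc, hc'⟩ hcc
  · rw [if_pos hc, if_neg hc', Finset.union_empty]
    exact Finset.disjoint_union_left.mpr
      ⟨hmm, Finset.disjoint_singleton_left.mpr (e_not_mem_map Q')⟩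
  · rw [if_neg hc, if_pos hc', Finset.union_empty]
    exact Finset.disjoint_union_right.mpr
      ⟨hmm, Finset.disjoint_singleton_right.mpr (e_not_mem_map Q)⟩
  · rw [if_neg hc, if_neg hc', Finset.union_empty, Finset.union_empty]
    exact hmm

end LP

set_option maxHeartbeats 2000000 in
/-- `LPostS = PostS`: a language is recognized with some error bound `ε < 1/2` by a
Latvian RT-PostPFA iff it is recognized with some error bound `ε < 1/2` by an RT-PostPFA. -/
theorem LPostS_eq_PostS {α : Type} [Fintype α] (L : Set (List α)) :
    LPostS L ↔ PostS L := by
  constructor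
  · -- hard direction: Latvian → ordinary
    rintro ⟨M, ε, hε0, hε2, hrec⟩
    classical
    -- minimum positive entry
    set F : ESym α × Fin (M.n+1) × Fin (M.n+1) → ℝ :=
      fun p => if 0 < M.A p.1 p.2.1 p.2.2 then M.A p.1 p.2.1 p.2.2 else 1 with hF_def
    have hne : (Finset.univ : Finset (ESym α × Fin (M.n+1) × Fin (M.n+1))).Nonempty :=
      ⟨(ESym.cent, 0, 0), Finset.mem_univ _⟩
    set m : ℝ := Finset.univ.inf' hne F with hm_def
    have hm0 : 0 < m := by
      rw [hm_def, Finset.lt_inf'_iff]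
      intro p _
      simp only [hF_def]
      split
      · assumption
      · norm_num
    have hment : ∀ σ i j, 0 < M.A σ i j → m ≤ M.A σ i j := by
      intro σ i j h
      have h1 : m ≤ F (σ, i, j) := Finset.inf'_le F (Finset.mem_univ _)
      simpa [hF_def, if_pos h] using h1
    have hm1 : m ≤ 1 := by
      have h1 : m ≤ F (ESym.cent, 0, 0) := Finset.inf'_le F (Finset.mem_univ _)
      have h2 : F (ESym.cent, 0, 0) ≤ 1 := by
        simp only [hF_def]
        split
        · calc M.A ESym.cent 0 0 ≤ ∑ i, M.A ESym.cent i 0 :=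
              Finset.single_le_sum (fun i _ => M.nonneg _ i 0) (Finset.mem_univ 0)
            _ = 1 := M.colSum _ 0
        · exact le_refl 1
      linarith
    -- parameters
    set γ : ℝ := (1/2 - ε)/2 with hγ_def
    have hγ0 : 0 < γ := by rw [hγ_def]; linarith
    set η : ℝ := min (1/2) γ with hη_def
    have hη0 : 0 < η := lt_min (by norm_num) hγ0
    have hηhalf : η ≤ 1/2 := min_le_left _ _
    have hηγ : η ≤ γ := min_le_right _ _
    set δ : ℝ := m * η with hδ_def
    have hδ0 : 0 < δ := mul_pos hm0 hη0
    have hδhalf : δ ≤ 1/2 := by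
      calc δ = m * η := hδ_def
        _ ≤ 1 * (1/2) := mul_le_mul hm1 hηhalf hη0.le zero_le_one
        _ = 1/2 := by ring
    -- run facts for M
    have hbound := fun w => LP.pRun_bound M.A M.nonneg m hm0.le hment w
    have hPnn : ∀ w : List α, 0 ≤ M.pacc w := fun w =>
      Finset.sum_nonneg fun i _ => (hbound w i).1
    have hRnn : ∀ w : List α, 0 ≤ M.prej w := fun w =>
      Finset.sum_nonneg fun i _ => (hbound w i).1
    have hSlb : ∀ w : List α, 0 < M.pacc w + M.prej w →
        m ^ (w.length+2) ≤ M.pacc w + M.prej w := by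
      intro w hS
      have hex : ∃ i ∈ M.Qpa ∪ M.Qpr, 0 < pRun M.A w i := by
        by_contra hcon
        push_neg at hcon
        have h1 : M.pacc w ≤ 0 := Finset.sum_nonpos fun i hi =>
          hcon i (Finset.mem_union_left _ hi)
        have h2 : M.prej w ≤ 0 := Finset.sum_nonpos fun i hi =>
          hcon i (Finset.mem_union_right _ hi)
        linarith
      obtain ⟨i, hi, hpos⟩ := hex
      have hlb := (hbound w i).2 hpos
      have hle : pRun M.A w i ≤ M.pacc w + M.prej w := by
        rcases Finset.mem_union.mp hi with hi | hi
        · have h1 : pRun M.A w i ≤ M.pacc w :=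
            Finset.single_le_sum (fun j _ => (hbound w j).1) hi
          linarith [hRnn w]
        · have h1 : pRun M.A w i ≤ M.prej w :=
            Finset.single_le_sum (fun j _ => (hbound w j).1) hi
          linarith [hPnn w]
      linarith
    -- the new machine's post-state sets
    have hccAR : ¬((M.tau = PostFlag.A) ∧ (M.tau = PostFlag.R)) := by
      rintro ⟨h1, h2⟩
      rw [h1] at h2
      exact PostFlag.noConfusion h2
    -- run and sum formulas for the new machine
    have hQa : ∀ w : List α,
        ∑ i ∈ (M.Qpa.map LP.emb ∪ if M.tau = PostFlag.A then {LP.eSt} else ∅),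
            pRun (n := M.n + 2) (LP.bmat M.A δ) w i
          = (1-δ) * M.pacc w + (if M.tau = PostFlag.A then δ ^ (w.length+2) else 0) := by
      intro w
      obtain ⟨r', hr'⟩ := LP.pRun_bmat M.A δ w
      rw [show pRun (n := M.n + 2) (LP.bmat M.A δ) w = pRun (LP.bmat M.A δ) w from rfl, hr',
        LP.sum_union_e]
      rw [← Finset.mul_sum]
      rfl
    have hQr : ∀ w : List α,
        ∑ i ∈ (M.Qpr.map LP.emb ∪ if M.tau = PostFlag.R then {LP.eSt} else ∅),
            pRun (n := M.n + 2) (LP.bmat M.A δ) w i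
          = (1-δ) * M.prej w + (if M.tau = PostFlag.R then δ ^ (w.length+2) else 0) := by
      intro w
      obtain ⟨r', hr'⟩ := LP.pRun_bmat M.A δ w
      rw [show pRun (n := M.n + 2) (LP.bmat M.A δ) w = pRun (LP.bmat M.A δ) w from rfl, hr',
        LP.sum_union_e]
      rw [← Finset.mul_sum]
      rfl
    have hite : ∀ w : List α,
        (if M.tau = PostFlag.A then δ ^ (w.length+2) else 0)
          + (if M.tau = PostFlag.R then δ ^ (w.length+2) else 0) = δ ^ (w.length+2) := by
      intro w
      cases M.tau <;> simp
    have hpow : ∀ w : List α, 0 < δ ^ (w.length + 2) := fun w => pow_pos hδ0 _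
    -- assemble
    refine ⟨PostPFA.mk (M.n + 2) (LP.bmat M.A δ)
        (LP.bmat_nonneg M.A δ M.nonneg hδ0.le (by linarith))
        (LP.bmat_colSum M.A δ M.colSum)
        (M.Qpa.map LP.emb ∪ (if M.tau = PostFlag.A then {LP.eSt} else ∅))
        (M.Qpr.map LP.emb ∪ (if M.tau = PostFlag.R then {LP.eSt} else ∅))
        (LP.disj_union_e M.Qpa M.Qpr M.disj _ _ hccAR)
        ?_, ε + γ, by linarith, by rw [hγ_def]; linarith, ?_⟩
    · -- positivity of the postselection probability
      intro w
      rw [hQa w, hQr w]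
      have h1 : 0 ≤ (1-δ) * M.pacc w := mul_nonneg (by linarith) (hPnn w)
      have h2 : 0 ≤ (1-δ) * M.prej w := mul_nonneg (by linarith) (hRnn w)
      have h3 := hite w
      have h4 := hpow w
      linarith
    · -- recognition
      intro w
      simp only [PostPFA.fa, PostPFA.pacc, PostPFA.prej]
      rw [hQa w, hQr w]
      obtain ⟨hin, hout⟩ := hrec w
      have h1δ : (0:ℝ) ≤ 1 - δ := by linarith
      rcases eq_or_lt_of_le (by linarith [hPnn w, hRnn w] : (0:ℝ) ≤ M.pacc w + M.prej w)
        with hS0 | hSpos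
      · -- zero postselection probability for M
        have hP0 : M.pacc w = 0 := by linarith [hPnn w, hRnn w]
        have hR0 : M.prej w = 0 := by linarith [hPnn w, hRnn w]
        have hfa0 : M.fa w = if M.tau = PostFlag.A then 1 else 0 := by
          have hnot : ¬ (0 < M.pacc w + M.prej w) := by rw [← hS0]; exact lt_irrefl 0
          simp [LPostPFA.fa, hnot]
        have hAR : (PostFlag.A : PostFlag) ≠ PostFlag.R := fun h => PostFlag.noConfusion h
        have hRA : (PostFlag.R : PostFlag) ≠ PostFlag.A := fun h => PostFlag.noConfusion h
        cases htau : M.tau with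
        | A =>
          have hfa1 : M.fa w = 1 := by rw [hfa0, htau, if_pos rfl]
          constructor
          · intro _
            rw [if_pos rfl, if_neg hAR, hP0, hR0]
            have h4 := hpow w
            rw [show (1-δ) * 0 + δ ^ (w.length+2) + ((1-δ) * 0 + 0) = δ ^ (w.length+2) by ring]
            rw [show (1-δ) * 0 + δ ^ (w.length+2) = δ ^ (w.length+2) by ring]
            rw [div_self h4.ne']
            linarith
          · intro hw
            have := hout hw
            rw [hfa1] at this
            linarith
        | R =>
          have hfa1 : M.fa w = 0 := by rw [hfa0, htau, if_neg hRA]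
          constructor
          · intro hw
            have := hin hw
            rw [hfa1] at this
            linarith
          · intro _
            rw [if_neg hRA, if_pos rfl, hP0, hR0]
            rw [show (1-δ) * 0 + 0 = (0:ℝ) by ring]
            rw [show (0:ℝ) + ((1-δ) * 0 + δ ^ (w.length+2)) = δ ^ (w.length+2) by ring]
            rw [zero_div]
            linarith
      · -- positive postselection probability for M
        have hfaeq : M.fa w = M.pacc w / (M.pacc w + M.prej w) := by
          simp [LPostPFA.fa, hSpos]
        have hk2 : 2 ≤ w.length + 2 := by omega
        have heS : δ ^ (w.length+2) ≤ η^2 * (M.pacc w + M.prej w) := by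
          calc δ ^ (w.length+2) = m ^ (w.length+2) * η ^ (w.length+2) := by
                rw [hδ_def, mul_pow]
            _ ≤ m ^ (w.length+2) * η ^ 2 :=
                mul_le_mul_of_nonneg_left
                  (pow_le_pow_of_le_one hη0.le (by linarith) hk2)
                  (pow_nonneg hm0.le _)
            _ ≤ (M.pacc w + M.prej w) * η ^ 2 :=
                mul_le_mul_of_nonneg_right (hSlb w hSpos) (pow_nonneg hη0.le _)
            _ = η^2 * (M.pacc w + M.prej w) := mul_comm _ _
        have hsq : η^2 ≤ γ*(1-δ) := by
          rw [pow_two]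
          exact mul_le_mul hηγ (by linarith) hη0.le hγ0.le
        have h2 : η^2 * (M.pacc w + M.prej w) ≤ γ*(1-δ) * (M.pacc w + M.prej w) :=
          mul_le_mul_of_nonneg_right hsq (by linarith)
        have hcaA : 0 ≤ (if M.tau = PostFlag.A then δ ^ (w.length+2) else 0) ∧
            (if M.tau = PostFlag.A then δ ^ (w.length+2) else 0) ≤ δ ^ (w.length+2) := by
          split <;> constructor <;> first | exact (hpow w).le | exact le_refl _ | norm_num
        have hcaR : 0 ≤ (if M.tau = PostFlag.R then δ ^ (w.length+2) else 0) ∧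
            (if M.tau = PostFlag.R then δ ^ (w.length+2) else 0) ≤ δ ^ (w.length+2) := by
          split <;> constructor <;> first | exact (hpow w).le | exact le_refl _ | norm_num
        have hS'pos : 0 < (1-δ) * M.pacc w
              + (if M.tau = PostFlag.A then δ ^ (w.length+2) else 0)
            + ((1-δ) * M.prej w
              + (if M.tau = PostFlag.R then δ ^ (w.length+2) else 0)) := by
          have h1 : 0 ≤ (1-δ) * M.pacc w := mul_nonneg h1δ (hPnn w)
          have h2 : 0 ≤ (1-δ) * M.prej w := mul_nonneg h1δ (hRnn w)
          have h3 := hite w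
          have h4 := hpow w
          linarith
        constructor
        · intro hw
          have hfa := hin hw
          rw [hfaeq] at hfa
          have hP' : (1-ε)*(M.pacc w + M.prej w) ≤ M.pacc w := (le_div_iff₀ hSpos).mp hfa
          rw [le_div_iff₀ hS'pos]
          have hmul : (1-δ)*((1-ε)*(M.pacc w + M.prej w)) ≤ (1-δ)*M.pacc w :=
            mul_le_mul_of_nonneg_left hP' h1δ
          nlinarith [hcaA.1, hcaR.1, heS, h2, hPnn w, hRnn w, hite w, hpow w, hγ0.le, hε0,
            mul_nonneg (by linarith : (0:ℝ) ≤ ε + γ) (hpow w).le]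
        · intro hw
          have hfa := hout hw
          rw [hfaeq] at hfa
          have hP' : M.pacc w ≤ ε*(M.pacc w + M.prej w) := by
            rw [div_le_iff₀ hSpos] at hfa
            linarith
          rw [div_le_iff₀ hS'pos]
          have hmul : (1-δ)*M.pacc w ≤ (1-δ)*(ε*(M.pacc w + M.prej w)) :=
            mul_le_mul_of_nonneg_left hP' h1δ
          nlinarith [hcaA.2, hcaR.1, heS, h2, hPnn w, hRnn w, hite w, hpow w, hγ0.le, hε0,
            mul_nonneg (by linarith : (0:ℝ) ≤ ε + γ) (hpow w).le]
  · -- easy direction: ordinary → Latvian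
    rintro ⟨M, ε, hε0, hε2, hrec⟩
    refine ⟨⟨M.n, M.A, M.nonneg, M.colSum, M.Qpa, M.Qpr, M.disj, PostFlag.A⟩, ε, hε0, hε2, ?_⟩
    intro w
    have hp : 0 < M.pacc w + M.prej w := M.postPos w
    have hfa : LPostPFA.fa ⟨M.n, M.A, M.nonneg, M.colSum, M.Qpa, M.Qpr, M.disj, PostFlag.A⟩ w
        = M.fa w := by
      show (if 0 < M.pacc w + M.prej w then M.pacc w / (M.pacc w + M.prej w)
            else if PostFlag.A = PostFlag.A then 1 else 0) = M.fa w
      rw [if_pos hp]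
      rfl
    rw [hfa]
    exact hrec w
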